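/- Let X have the N(Δ, σ₁²) distribution truncated to (l, u), let Y ~ N(Δ, σ₂²) independent of X, and let W = (τ₁X + τ₂Y)/(τ₁+τ₂) with τᵢ = 1/σᵢ². Then E[W] = Δ + (σ₁τ₁/(τ₁+τ₂))·(φ((l−Δ)/σ₁) − φ((u−Δ)/σ₁))/(Φ((u−Δ)/σ₁) − Φ((l−Δ)/σ₁)). -/

import Mathlib

open MeasureTheory ProbabilityTheory

noncomputable def phi (t : ℝ) : ℝ := (Real.sqrt (2 * Real.pi))⁻¹ * Real.exp (-(t ^ 2) / 2)

noncomputable def Phi (t : ℝ) : ℝ := ∫ x in Set.Iic t, phi x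

section AUX
open Real
open scoped NNReal ENNReal


lemma phi_pos (t : ℝ) : 0 < phi t := by
  have : 0 < Real.sqrt (2 * Real.pi) := Real.sqrt_pos.mpr (by positivity)
  exact mul_pos (inv_pos.mpr this) (Real.exp_pos _)

lemma phi_cont : Continuous phi := by
  unfold phi; fun_prop

lemma phi_integrable : Integrable phi := by
  have h : Integrable (fun x : ℝ => Real.exp (-(2⁻¹) * x ^ 2)) := integrable_exp_neg_mul_sq (by norm_num)
  have h2 := h.const_mul (Real.sqrt (2 * Real.pi))⁻¹
  refine h2.congr (Filter.Eventually.of_forall fun x => ?_)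
  unfold phi; rw [show -(x^2)/2 = -(2⁻¹:ℝ)*x^2 by ring]

lemma phi_hasDeriv (t : ℝ) : HasDerivAt phi (-t * phi t) t := by
  have h1 : HasDerivAt (fun t : ℝ => -(t ^ 2) / 2) (-t) t := by
    have := ((hasDerivAt_pow 2 t).neg).div_const 2
    refine this.congr_deriv ?_; simp; ring
  have h2 := (h1.exp).const_mul (Real.sqrt (2 * Real.pi))⁻¹
  refine h2.congr_deriv ?_
  unfold phi; ring

lemma Phi_eq (s : ℝ) : Phi s = Phi 0 + ∫ x in (0:ℝ)..s, phi x := by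
  unfold Phi
  rw [← intervalIntegral.integral_Iic_sub_Iic phi_integrable.integrableOn phi_integrable.integrableOn]
  ring

lemma Phi_hasDeriv (t : ℝ) : HasDerivAt Phi (phi t) t := by
  have h : HasDerivAt (fun s : ℝ => Phi 0 + ∫ x in (0:ℝ)..s, phi x) (phi t) t := by
    refine HasDerivAt.const_add _ ?_
    exact intervalIntegral.integral_hasDerivAt_right
      phi_integrable.intervalIntegrable
      (phi_cont.stronglyMeasurableAtFilter _ _) phi_cont.continuousAt
  exact h.congr_of_eventuallyEq (Filter.Eventually.of_forall fun s => (Phi_eq s))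




lemma Phi_sub_Phi (a b : ℝ) : Phi b - Phi a = ∫ x in a..b, phi x := by
  unfold Phi
  exact intervalIntegral.integral_Iic_sub_Iic phi_integrable.integrableOn phi_integrable.integrableOn

lemma Zpos {σ1 Δ l u : ℝ} (hσ1 : 0 < σ1) (hlu : l < u) :
    0 < Phi ((u - Δ) / σ1) - Phi ((l - Δ) / σ1) := by
  rw [Phi_sub_Phi]
  exact intervalIntegral.intervalIntegral_pos_of_pos phi_integrable.intervalIntegrable phi_pos
    (by gcongr)

lemma inner_deriv {σ1 : ℝ} (Δ : ℝ) (x : ℝ) :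
    HasDerivAt (fun x : ℝ => (x - Δ) / σ1) (1 / σ1) x := by
  simpa [one_div] using ((hasDerivAt_id x).sub_const Δ).div_const σ1

lemma key_integral {σ1 : ℝ} (hσ1 : 0 < σ1) (Δ l u : ℝ) :
    ∫ x in l..u, x * ((1 / σ1) * phi ((x - Δ) / σ1)) =
      Δ * (Phi ((u - Δ) / σ1) - Phi ((l - Δ) / σ1))
        + σ1 * (phi ((l - Δ) / σ1) - phi ((u - Δ) / σ1)) := by
  have hF : ∀ x : ℝ, HasDerivAt
      (fun x => Δ * Phi ((x - Δ) / σ1) - σ1 * phi ((x - Δ) / σ1))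
      (x * ((1 / σ1) * phi ((x - Δ) / σ1))) x := by
    intro x
    have h1 := ((Phi_hasDeriv ((x - Δ) / σ1)).comp x (inner_deriv Δ x)).const_mul Δ
    have h2 := ((phi_hasDeriv ((x - Δ) / σ1)).comp x (inner_deriv Δ x)).const_mul σ1
    have h := h1.sub h2
    refine h.congr_deriv ?_
    field_simp
    ring
  have hcont : Continuous fun x : ℝ => x * ((1 / σ1) * phi ((x - Δ) / σ1)) := by
    have := phi_cont; fun_prop
  rw [intervalIntegral.integral_eq_sub_of_hasDerivAt (fun x _ => hF x)
    (hcont.intervalIntegrable _ _)]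
  ring

lemma norm_integral {σ1 : ℝ} (hσ1 : 0 < σ1) (Δ l u : ℝ) :
    ∫ x in l..u, (1 / σ1) * phi ((x - Δ) / σ1) =
      Phi ((u - Δ) / σ1) - Phi ((l - Δ) / σ1) := by
  have hF : ∀ x : ℝ, HasDerivAt (fun x => Phi ((x - Δ) / σ1))
      ((1 / σ1) * phi ((x - Δ) / σ1)) x := by
    intro x
    have h := (Phi_hasDeriv ((x - Δ) / σ1)).comp x (inner_deriv Δ x)
    refine h.congr_deriv ?_; ring
  have hcont : Continuous fun x : ℝ => (1 / σ1) * phi ((x - Δ) / σ1) := by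
    have := phi_cont; fun_prop
  rw [intervalIntegral.integral_eq_sub_of_hasDerivAt (fun x _ => hF x)
    (hcont.intervalIntegrable _ _)]

lemma integral_odd_zero (f : ℝ → ℝ) (hodd : ∀ x, f (-x) = - f x) :
    ∫ x, f x = 0 := by
  have h : ∫ x, f (-x) = ∫ x, f x :=
    (Measure.measurePreserving_neg (volume : Measure ℝ)).integral_comp
      (Homeomorph.neg ℝ).measurableEmbedding f
  have h2 : ∫ x, f (-x) = - ∫ x, f x := by
    simp_rw [hodd]; exact integral_neg f
  linarith [h, h2]

lemma gaussian_mean {v : ℝ≥0} (hv : v ≠ 0) (Δ : ℝ) :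
    ∫ x, x ∂(gaussianReal Δ v) = Δ := by
  have hvpos : (0 : ℝ) < v := by exact_mod_cast (zero_le (a := v)).lt_of_ne (Ne.symm hv)
  rw [gaussianReal_of_var_ne_zero _ hv]
  have hmeas : Measurable fun x : ℝ => Real.toNNReal (gaussianPDFReal Δ v x) :=
    (measurable_gaussianPDFReal Δ v).real_toNNReal
  have hpdf : (gaussianPDF Δ v) = fun x => ((fun x => Real.toNNReal (gaussianPDFReal Δ v x)) x : ℝ≥0∞) := by
    funext x; simp [gaussianPDF, ENNReal.ofReal]
  rw [hpdf, integral_withDensity_eq_integral_smul hmeas]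
  have heq : ∀ x : ℝ, (Real.toNNReal (gaussianPDFReal Δ v x)) • x
      = gaussianPDFReal Δ v x * x := by
    intro x
    rw [NNReal.smul_def, smul_eq_mul, Real.coe_toNNReal _ (gaussianPDFReal_nonneg Δ v x)]
  simp_rw [heq]
  -- shift
  have hshift : ∀ x : ℝ, gaussianPDFReal Δ v x * x
      = (fun y => gaussianPDFReal 0 v y * (y + Δ)) (x - Δ) := by
    intro x
    simp only
    rw [gaussianPDFReal_sub, zero_add, sub_add_cancel]
  simp_rw [hshift]
  rw [integral_sub_right_eq_self (fun y => gaussianPDFReal 0 v y * (y + Δ)) Δ]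
  have hint1 : Integrable (fun y : ℝ => gaussianPDFReal 0 v y * y) := by
    have hb : (0:ℝ) < (2 * (v:ℝ))⁻¹ := by positivity
    have := (integrable_mul_exp_neg_mul_sq hb).const_mul (√(2 * π * v))⁻¹
    refine this.congr (Filter.Eventually.of_forall fun y => ?_)
    simp only [gaussianPDFReal]
    rw [show -(y - 0)^2 / (2 * (v:ℝ)) = -(2 * (v:ℝ))⁻¹ * y^2 by field_simp; ring]
    ring
  have hint2 : Integrable (fun y : ℝ => gaussianPDFReal 0 v y * Δ) :=
    (integrable_gaussianPDFReal 0 v).mul_const Δ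
  have hsplit : (fun y : ℝ => gaussianPDFReal 0 v y * (y + Δ))
      = fun y => gaussianPDFReal 0 v y * y + gaussianPDFReal 0 v y * Δ := by
    funext y; ring
  rw [hsplit, integral_add hint1 hint2]
  have hodd : ∫ y : ℝ, gaussianPDFReal 0 v y * y = 0 := by
    apply integral_odd_zero
    intro y
    simp only [gaussianPDFReal]
    ring_nf
  rw [hodd, integral_mul_const, integral_gaussianPDFReal_eq_one 0 hv]
  ring

lemma gaussian_integrable_id {v : ℝ≥0} (hv : v ≠ 0) (Δ : ℝ) :
    Integrable (fun x : ℝ => x) (gaussianReal Δ v) := by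
  have hvpos : (0 : ℝ) < v := by exact_mod_cast (zero_le (a := v)).lt_of_ne (Ne.symm hv)
  rw [gaussianReal_of_var_ne_zero _ hv]
  have hmeas : Measurable fun x : ℝ => Real.toNNReal (gaussianPDFReal Δ v x) :=
    (measurable_gaussianPDFReal Δ v).real_toNNReal
  have hpdf : (gaussianPDF Δ v) = fun x => ((fun x => Real.toNNReal (gaussianPDFReal Δ v x)) x : ℝ≥0∞) := by
    funext x; simp [gaussianPDF, ENNReal.ofReal]
  rw [hpdf, integrable_withDensity_iff_integrable_smul hmeas]
  have hint1 : Integrable (fun y : ℝ => gaussianPDFReal 0 v y * y) := by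
    have hb : (0:ℝ) < (2 * (v:ℝ))⁻¹ := by positivity
    have := (integrable_mul_exp_neg_mul_sq hb).const_mul (√(2 * π * v))⁻¹
    refine this.congr (Filter.Eventually.of_forall fun y => ?_)
    simp only [gaussianPDFReal]
    rw [show -(y - 0)^2 / (2 * (v:ℝ)) = -(2 * (v:ℝ))⁻¹ * y^2 by field_simp; ring]
    ring
  have hint2 : Integrable (fun y : ℝ => gaussianPDFReal 0 v y * Δ) :=
    (integrable_gaussianPDFReal 0 v).mul_const Δ
  have h := ((hint1.add hint2).comp_sub_right Δ)
  refine h.congr (Filter.Eventually.of_forall fun x => ?_)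
  simp only [Function.comp, Pi.add_apply]
  rw [NNReal.smul_def, smul_eq_mul, Real.coe_toNNReal _ (gaussianPDFReal_nonneg Δ v x)]
  rw [show gaussianPDFReal Δ v x = gaussianPDFReal 0 v (x - Δ) by
    rw [gaussianPDFReal_sub, zero_add]]
  ring
section Xside
variable {σ1 Δ l u : ℝ}

lemma g_meas (hσ1 : 0 < σ1) (Δ l u : ℝ) :
    Measurable fun x : ℝ => Real.toNNReal (Set.indicator (Set.Ioo l u)
      (fun x => (1 / σ1) * phi ((x - Δ) / σ1) /
        (Phi ((u - Δ) / σ1) - Phi ((l - Δ) / σ1))) x) := by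
  apply Measurable.real_toNNReal
  apply Measurable.indicator _ measurableSet_Ioo
  have h1 : Continuous fun x : ℝ => (1 / σ1) * phi ((x - Δ) / σ1) /
      (Phi ((u - Δ) / σ1) - Phi ((l - Δ) / σ1)) := by
    have := phi_cont; fun_prop
  exact h1.measurable

lemma g_smul_eq (hσ1 : 0 < σ1)
    (hD : 0 < Phi ((u - Δ) / σ1) - Phi ((l - Δ) / σ1)) (x : ℝ) :
    (Real.toNNReal (Set.indicator (Set.Ioo l u)
      (fun x => (1 / σ1) * phi ((x - Δ) / σ1) /
        (Phi ((u - Δ) / σ1) - Phi ((l - Δ) / σ1))) x)) • x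
    = Set.indicator (Set.Ioo l u)
        (fun x => x * ((1 / σ1) * phi ((x - Δ) / σ1)) /
          (Phi ((u - Δ) / σ1) - Phi ((l - Δ) / σ1))) x := by
  have hnn : 0 ≤ Set.indicator (Set.Ioo l u)
      (fun x => (1 / σ1) * phi ((x - Δ) / σ1) /
        (Phi ((u - Δ) / σ1) - Phi ((l - Δ) / σ1))) x := by
    apply Set.indicator_nonneg
    intro y _
    have := (phi_pos ((y - Δ) / σ1)).le
    positivity
  rw [NNReal.smul_def, smul_eq_mul, Real.coe_toNNReal _ hnn]
  by_cases hx : x ∈ Set.Ioo l u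
  · rw [Set.indicator_of_mem hx, Set.indicator_of_mem hx]; ring
  · rw [Set.indicator_of_notMem hx, Set.indicator_of_notMem hx]; ring

lemma X_mean (hσ1 : 0 < σ1) (hlu : l < u)
    (hD : 0 < Phi ((u - Δ) / σ1) - Phi ((l - Δ) / σ1)) :
    ∫ x, x ∂(volume.withDensity (fun x => ENNReal.ofReal
      (Set.indicator (Set.Ioo l u)
        (fun x => (1 / σ1) * phi ((x - Δ) / σ1) /
          (Phi ((u - Δ) / σ1) - Phi ((l - Δ) / σ1))) x)))
    = Δ + σ1 * ((phi ((l - Δ) / σ1) - phi ((u - Δ) / σ1)) /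
        (Phi ((u - Δ) / σ1) - Phi ((l - Δ) / σ1))) := by
  have hcoe : (fun x : ℝ => ENNReal.ofReal
      (Set.indicator (Set.Ioo l u)
        (fun x => (1 / σ1) * phi ((x - Δ) / σ1) /
          (Phi ((u - Δ) / σ1) - Phi ((l - Δ) / σ1))) x))
      = fun x => ((fun x : ℝ => Real.toNNReal (Set.indicator (Set.Ioo l u)
        (fun x => (1 / σ1) * phi ((x - Δ) / σ1) /
          (Phi ((u - Δ) / σ1) - Phi ((l - Δ) / σ1))) x)) x : ℝ≥0∞) := by
    funext x; simp [ENNReal.ofReal]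
  rw [hcoe, integral_withDensity_eq_integral_smul (g_meas hσ1 Δ l u)]
  simp_rw [g_smul_eq hσ1 hD]
  rw [integral_indicator measurableSet_Ioo, ← integral_Ioc_eq_integral_Ioo,
    ← intervalIntegral.integral_of_le hlu.le]
  rw [intervalIntegral.integral_div, key_integral hσ1 Δ l u]
  have hD' : Phi ((u - Δ) / σ1) - Phi ((l - Δ) / σ1) ≠ 0 := hD.ne'
  field_simp

lemma X_integrable (hσ1 : 0 < σ1) (hlu : l < u)
    (hD : 0 < Phi ((u - Δ) / σ1) - Phi ((l - Δ) / σ1)) :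
    Integrable (fun x : ℝ => x) (volume.withDensity (fun x => ENNReal.ofReal
      (Set.indicator (Set.Ioo l u)
        (fun x => (1 / σ1) * phi ((x - Δ) / σ1) /
          (Phi ((u - Δ) / σ1) - Phi ((l - Δ) / σ1))) x))) := by
  have hcoe : (fun x : ℝ => ENNReal.ofReal
      (Set.indicator (Set.Ioo l u)
        (fun x => (1 / σ1) * phi ((x - Δ) / σ1) /
          (Phi ((u - Δ) / σ1) - Phi ((l - Δ) / σ1))) x))
      = fun x => ((fun x : ℝ => Real.toNNReal (Set.indicator (Set.Ioo l u)
        (fun x => (1 / σ1) * phi ((x - Δ) / σ1) /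
          (Phi ((u - Δ) / σ1) - Phi ((l - Δ) / σ1))) x)) x : ℝ≥0∞) := by
    funext x; simp [ENNReal.ofReal]
  rw [hcoe, integrable_withDensity_iff_integrable_smul (g_meas hσ1 Δ l u)]
  have key : Integrable (Set.indicator (Set.Ioo l u)
      (fun x => x * ((1 / σ1) * phi ((x - Δ) / σ1)) /
        (Phi ((u - Δ) / σ1) - Phi ((l - Δ) / σ1)))) := by
    rw [integrable_indicator_iff measurableSet_Ioo]
    have hc : Continuous fun x : ℝ => x * ((1 / σ1) * phi ((x - Δ) / σ1)) /
        (Phi ((u - Δ) / σ1) - Phi ((l - Δ) / σ1)) := by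
      have := phi_cont; fun_prop
    exact (hc.integrableOn_Icc (a := l) (b := u)).mono_set Set.Ioo_subset_Icc_self
  exact key.congr (Filter.Eventually.of_forall fun x => (g_smul_eq hσ1 hD x).symm)

end Xside

end AUX

theorem stmt_6 {Ω : Type*} [MeasurableSpace Ω] (μ : Measure Ω) [IsProbabilityMeasure μ]
    (X Y : Ω → ℝ) (hX : Measurable X) (hY : Measurable Y)
    (hindep : IndepFun X Y μ)
    (σ1 σ2 Δ l u τ1 τ2 : ℝ) (hσ1 : 0 < σ1) (hσ2 : 0 < σ2) (hlu : l < u)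
    (hτ1 : τ1 = 1 / σ1 ^ 2) (hτ2 : τ2 = 1 / σ2 ^ 2)
    (hlawX : Measure.map X μ = volume.withDensity (fun x => ENNReal.ofReal
      (Set.indicator (Set.Ioo l u)
        (fun x => (1 / σ1) * phi ((x - Δ) / σ1) /
          (Phi ((u - Δ) / σ1) - Phi ((l - Δ) / σ1))) x)))
    (hlawY : Measure.map Y μ = gaussianReal Δ (Real.toNNReal (σ2 ^ 2))) :
    (∫ ω, (τ1 * X ω + τ2 * Y ω) / (τ1 + τ2) ∂μ) =
      Δ + (σ1 * τ1 / (τ1 + τ2)) *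
        ((phi ((l - Δ) / σ1) - phi ((u - Δ) / σ1)) /
          (Phi ((u - Δ) / σ1) - Phi ((l - Δ) / σ1))) := by
  have hτ1pos : 0 < τ1 := by rw [hτ1]; positivity
  have hτ2pos : 0 < τ2 := by rw [hτ2]; positivity
  have hsum : τ1 + τ2 ≠ 0 := by positivity
  have hD : 0 < Phi ((u - Δ) / σ1) - Phi ((l - Δ) / σ1) := Zpos hσ1 hlu
  have hv : Real.toNNReal (σ2 ^ 2) ≠ 0 :=
    (Real.toNNReal_pos.mpr (by positivity)).ne'
  -- X
  have EX : ∫ ω, X ω ∂μ = Δ + σ1 * ((phi ((l - Δ) / σ1) - phi ((u - Δ) / σ1)) /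
      (Phi ((u - Δ) / σ1) - Phi ((l - Δ) / σ1))) := by
    have h := X_mean (Δ := Δ) hσ1 hlu hD
    rw [← hlawX] at h
    rwa [integral_map (f := fun x : ℝ => x) hX.aemeasurable measurable_id.aestronglyMeasurable] at h
  have IX : Integrable X μ := by
    have h := X_integrable (Δ := Δ) hσ1 hlu hD
    rw [← hlawX] at h
    exact (integrable_map_measure measurable_id.aestronglyMeasurable
      hX.aemeasurable).mp h
  -- Y
  have EY : ∫ ω, Y ω ∂μ = Δ := by
    have h := gaussian_mean hv Δ
    rw [← hlawY] at h
    rwa [integral_map (f := fun x : ℝ => x) hY.aemeasurable measurable_id.aestronglyMeasurable] at h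
  have IY : Integrable Y μ := by
    have h := gaussian_integrable_id hv Δ
    rw [← hlawY] at h
    exact (integrable_map_measure measurable_id.aestronglyMeasurable
      hY.aemeasurable).mp h
  have hsplit : (fun ω => (τ1 * X ω + τ2 * Y ω) / (τ1 + τ2))
      = fun ω => (τ1 + τ2)⁻¹ * (τ1 * X ω) + (τ1 + τ2)⁻¹ * (τ2 * Y ω) := by
    funext ω; ring
  rw [hsplit, integral_add ((IX.const_mul τ1).const_mul _) ((IY.const_mul τ2).const_mul _),
    integral_const_mul, integral_const_mul, integral_const_mul, integral_const_mul, EX, EY]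
  have hD' : Phi ((u - Δ) / σ1) - Phi ((l - Δ) / σ1) ≠ 0 := hD.ne'
  field_simp
  ring
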